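/- For X ~ N(d, 1) with d ∈ ℝ and u > 0, E[X² | |X| > u] = 1 + d² + A + B, where A = u(φ(u-d) + φ(u+d))/(Φ(d-u) + Φ(-d-u)) and B = d(φ(u-d) - φ(u+d))/(Φ(d-u) + Φ(-d-u)). -/

import Mathlib

open MeasureTheory Real

/-- Standard normal density. -/
noncomputable def phi (x : ℝ) : ℝ := (Real.sqrt (2 * π))⁻¹ * Real.exp (-x ^ 2 / 2)

/-- Standard normal CDF. -/
noncomputable def Phi (x : ℝ) : ℝ := ∫ t in Set.Iic x, phi t

open Set Filter

lemma phi_pos (x : ℝ) : 0 < phi x := by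
  have h : 0 < Real.sqrt (2 * π) := Real.sqrt_pos.2 (by positivity)
  exact mul_pos (inv_pos.2 h) (Real.exp_pos _)

lemma phi_even (x : ℝ) : phi (-x) = phi x := by simp [phi]

lemma phi_eq : phi = fun x => (Real.sqrt (2 * π))⁻¹ * Real.exp (-(1/2) * x ^ 2) := by
  funext x
  simp only [phi]
  ring_nf

lemma integrable_phi : Integrable phi := by
  rw [phi_eq]
  exact (integrable_exp_neg_mul_sq (by norm_num : (0:ℝ) < 1/2)).const_mul _

lemma integrable_id_phi : Integrable (fun x => x * phi x) := by
  have h := (integrable_mul_exp_neg_mul_sq (by norm_num : (0:ℝ) < 1/2)).const_mul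
    (Real.sqrt (2 * π))⁻¹
  exact h.congr (Filter.Eventually.of_forall fun x => by rw [phi_eq]; ring)

lemma integrable_sq_phi : Integrable (fun x => x ^ 2 * phi x) := by
  have h := (integrable_rpow_mul_exp_neg_mul_sq (by norm_num : (0:ℝ) < 1/2)
    (by norm_num : (-1:ℝ) < 2)).const_mul (Real.sqrt (2 * π))⁻¹
  refine h.congr (Filter.Eventually.of_forall fun x => ?_)
  simp only [Real.rpow_two, phi_eq]
  ring

lemma hasDerivAt_phi (x : ℝ) : HasDerivAt phi (-x * phi x) x := by
  have h1 : HasDerivAt (fun x : ℝ => -x ^ 2 / 2) (-x) x := by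
    have := ((hasDerivAt_pow 2 x).neg).div_const 2
    refine this.congr_deriv ?_
    push_cast
    ring
  have h2 := (h1.exp).const_mul (Real.sqrt (2 * π))⁻¹
  have hphi : phi = fun x : ℝ => (Real.sqrt (2 * π))⁻¹ * Real.exp (-x ^ 2 / 2) := rfl
  rw [hphi]
  refine h2.congr_deriv ?_
  simp only [phi]
  ring

lemma tendsto_phi : Tendsto phi atTop (nhds 0) := by
  rw [phi_eq]
  have h1 : Tendsto (fun x : ℝ => -(1/2) * x ^ 2) atTop atBot := by
    apply Tendsto.const_mul_atTop_of_neg (by norm_num : -(1/2 : ℝ) < 0)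
    exact tendsto_pow_atTop (by norm_num : 2 ≠ 0)
  have h2 : Tendsto (fun x : ℝ => Real.exp (-(1/2) * x ^ 2)) atTop (nhds 0) :=
    Real.tendsto_exp_atBot.comp h1
  have := h2.const_mul (Real.sqrt (2 * π))⁻¹
  simpa using this

lemma tendsto_id_phi : Tendsto (fun x => x * phi x) atTop (nhds 0) := by
  have hlo := rpow_mul_exp_neg_mul_sq_isLittleO_exp_neg (by norm_num : (0:ℝ) < 1/2) 1
  have hexp : Tendsto (fun x : ℝ => Real.exp (-(1/2) * x)) atTop (nhds 0) := by
    apply Real.tendsto_exp_atBot.comp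
    exact Tendsto.const_mul_atTop_of_neg (by norm_num : -(1/2 : ℝ) < 0) tendsto_id
  have h0 : Tendsto (fun x : ℝ => x ^ (1:ℝ) * Real.exp (-(1/2) * x ^ 2)) atTop (nhds 0) :=
    hlo.tendsto_zero_of_tendsto hexp
  have h := h0.const_mul (Real.sqrt (2 * π))⁻¹
  have heq : (fun x : ℝ => (Real.sqrt (2 * π))⁻¹ * (x ^ (1:ℝ) * Real.exp (-(1/2) * x ^ 2)))
      = fun x => x * phi x := by
    funext x
    rw [Real.rpow_one, phi_eq]
    ring
  rw [heq] at h
  simpa using h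

lemma int_phi_Ioi (a : ℝ) : ∫ x in Ioi a, phi x = Phi (-a) := by
  rw [Phi, ← integral_comp_neg_Ioi]
  exact setIntegral_congr_fun measurableSet_Ioi fun x _ => (phi_even x).symm

lemma int_id_phi_Ioi (a : ℝ) : ∫ x in Ioi a, x * phi x = phi a := by
  have hderiv : ∀ x ∈ Ici a, HasDerivAt (fun x => -phi x) (x * phi x) x := by
    intro x _
    have := (hasDerivAt_phi x).neg
    refine this.congr_deriv ?_
    ring
  have h := integral_Ioi_of_hasDerivAt_of_tendsto' hderiv
    integrable_id_phi.integrableOn (by simpa using tendsto_phi.neg)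
  simpa using h

lemma int_sq_phi_Ioi (a : ℝ) : ∫ x in Ioi a, x ^ 2 * phi x = a * phi a + Phi (-a) := by
  have hderiv : ∀ x ∈ Ici a, HasDerivAt (fun x => -(x * phi x))
      (x ^ 2 * phi x - phi x) x := by
    intro x _
    have := ((hasDerivAt_id x).mul (hasDerivAt_phi x)).neg
    refine this.congr_deriv ?_
    simp
    ring
  have hint : IntegrableOn (fun x => x ^ 2 * phi x - phi x) (Ioi a) :=
    (integrable_sq_phi.sub integrable_phi).integrableOn
  have htend : Tendsto (fun x => -(x * phi x)) atTop (nhds 0) := by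
    simpa using tendsto_id_phi.neg
  have h := integral_Ioi_of_hasDerivAt_of_tendsto' hderiv hint htend
  have hsub : ∫ x in Ioi a, (x ^ 2 * phi x - phi x)
      = (∫ x in Ioi a, x ^ 2 * phi x) - ∫ x in Ioi a, phi x :=
    integral_sub integrable_sq_phi.integrableOn integrable_phi.integrableOn
  rw [hsub, int_phi_Ioi] at h
  simp only [neg_zero, zero_sub, neg_neg] at h
  linarith [h]

lemma shift_Ioi (g : ℝ → ℝ) (a d : ℝ) :
    ∫ x in Ioi a, g (x - d) = ∫ x in Ioi (a - d), g x := by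
  have h := (measurePreserving_add_right volume (-d)).setIntegral_preimage_emb
    (MeasurableEquiv.addRight (-d)).measurableEmbedding g (Ioi (a - d))
  have hpre : (fun x : ℝ => x + -d) ⁻¹' Ioi (a - d) = Ioi a := by
    ext x
    simp only [mem_preimage, mem_Ioi]
    constructor <;> intro hx <;> linarith
  rw [hpre] at h
  rw [← h]
  refine setIntegral_congr_fun measurableSet_Ioi fun x _ => ?_
  rw [sub_eq_add_neg]

lemma key (d a : ℝ) :
    ∫ x in Ioi a, x ^ 2 * phi (x - d)
      = (1 + d ^ 2) * Phi (d - a) + (a + d) * phi (a - d) := by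
  have hshift : ∫ x in Ioi a, x ^ 2 * phi (x - d)
      = ∫ x in Ioi (a - d), (x + d) ^ 2 * phi x := by
    have h := shift_Ioi (fun x => (x + d) ^ 2 * phi x) a d
    rw [← h]
    refine setIntegral_congr_fun measurableSet_Ioi fun x _ => ?_
    rw [sub_add_cancel]
  rw [hshift]
  have hsplit : ∫ x in Ioi (a - d), (x + d) ^ 2 * phi x
      = ∫ x in Ioi (a - d), (x ^ 2 * phi x + (2 * d * (x * phi x) + d ^ 2 * phi x)) :=
    setIntegral_congr_fun measurableSet_Ioi fun x _ => by ring
  have hg : Integrable (fun x : ℝ => 2 * d * (x * phi x) + d ^ 2 * phi x) :=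
    (integrable_id_phi.const_mul (2*d)).add (integrable_phi.const_mul (d^2))
  rw [hsplit,
    integral_add integrable_sq_phi.integrableOn hg.integrableOn,
    integral_add ((integrable_id_phi.const_mul (2*d)).integrableOn)
      ((integrable_phi.const_mul (d^2)).integrableOn),
    integral_const_mul, integral_const_mul, int_sq_phi_Ioi, int_id_phi_Ioi, int_phi_Ioi]
  rw [show -(a - d) = d - a by ring]
  ring

lemma Phi_pos (x : ℝ) : 0 < Phi x := by
  rw [Phi, setIntegral_pos_iff_support_of_nonneg_ae]
  · have hsupp : Function.support phi = univ := by
      ext y; simp [Function.mem_support, (phi_pos y).ne']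
    rw [hsupp, univ_inter]
    simp [Real.volume_Iic]
  · exact Filter.Eventually.of_forall fun y => (phi_pos y).le
  · exact integrable_phi.integrableOn

/-- For X ~ N(d,1) and u > 0, E[X² | |X| > u] = 1 + d² + A + B. -/
theorem stmt6 (d u : ℝ) (hu : 0 < u) :
    (∫ x in {x : ℝ | u < |x|}, x ^ 2 * phi (x - d)) / (Phi (d - u) + Phi (-d - u))
      = 1 + d ^ 2
        + u * (phi (u - d) + phi (u + d)) / (Phi (d - u) + Phi (-d - u))
        + d * (phi (u - d) - phi (u + d)) / (Phi (d - u) + Phi (-d - u)) := by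
  have hN : 0 < Phi (d - u) + Phi (-d - u) := by
    have := Phi_pos (d - u); have := Phi_pos (-d - u); linarith
  -- global integrability of the integrand
  have hglob : Integrable (fun x => x ^ 2 * phi (x - d)) := by
    have hg : Integrable (fun x : ℝ => 2 * d * (x * phi x) + d ^ 2 * phi x) :=
      (integrable_id_phi.const_mul (2*d)).add (integrable_phi.const_mul (d^2))
    have h1 : Integrable (fun x => (x + d) ^ 2 * phi x) :=
      (integrable_sq_phi.add hg).congr (Filter.Eventually.of_forall fun x => by
        simp only [Pi.add_apply]; ring)
    exact (h1.comp_sub_right d).congr (Filter.Eventually.of_forall fun x => by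
      simp)
  -- split the set
  have hset : {x : ℝ | u < |x|} = Iio (-u) ∪ Ioi u := by
    ext x
    simp only [mem_setOf_eq, mem_union, mem_Iio, mem_Ioi, lt_abs]
    constructor
    · rintro (h | h); · right; exact h
      · left; linarith
    · rintro (h | h); · right; linarith
      · left; exact h
  have hsplit : (∫ x in {x : ℝ | u < |x|}, x ^ 2 * phi (x - d))
      = (∫ x in Iio (-u), x ^ 2 * phi (x - d)) + ∫ x in Ioi u, x ^ 2 * phi (x - d) := by
    rw [hset]
    exact setIntegral_union
      (by rw [Set.disjoint_left]; intro x hx hx'; simp at hx hx'; linarith)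
      measurableSet_Ioi hglob.integrableOn hglob.integrableOn
  -- left piece
  have hleft : (∫ x in Iio (-u), x ^ 2 * phi (x - d))
      = (1 + d ^ 2) * Phi (-d - u) + (u - d) * phi (u + d) := by
    rw [← integral_Iic_eq_integral_Iio, ← integral_comp_neg_Ioi]
    have hcong : ∀ x ∈ Ioi u, (-x) ^ 2 * phi (-x - d) = x ^ 2 * phi (x - -d) := by
      intro x _
      rw [show (-x - d) = -(x + d) by ring, phi_even, neg_sq, sub_neg_eq_add]
    rw [setIntegral_congr_fun measurableSet_Ioi hcong, key (-d) u]
    have h1 : -d - u = -d - u := rfl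
    rw [show u - -d = u + d by ring]
    ring_nf
  -- right piece
  have hright : (∫ x in Ioi u, x ^ 2 * phi (x - d))
      = (1 + d ^ 2) * Phi (d - u) + (u + d) * phi (u - d) := key d u
  rw [hsplit, hleft, hright]
  field_simp
  ring
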